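/- Let (Ω,𝓕,P) be a probability space, Xᵢ : Ω → Ωᵢ (i = 1,2,3,4) measurable maps into measurable spaces, and let Y : Ω₂ → ℝ be 𝓕₂-measurable and integrable with respect to P.map X₂. Fix measurable sets A₃ ⊆ Ω₃ and A₄ ⊆ Ω₄ with P(X₃⁻¹(A₃)) > 0. Then there exists an 𝓕₁-measurable function φ : Ω₁ → ℝ such that for every measurable A₁ ⊆ Ω₁, ∫_{A₁} φ d(((P.restrict (X₃⁻¹(A₃))).map X₁)) = ∫_{Ω₂} Y d(((P.restrict (X₁⁻¹(A₁) ∩ X₃⁻¹(A₃) ∩ X₄⁻¹(A₄))).map X₂)); moreover any two such functions agree ((P.restrict (X₃⁻¹(A₃))).map X₁)-almost everywhere. (Paper's Theorem 5.3: existence and uniqueness of the conditional expectation E_{[X₂, X₄∈A₄]}(Y | X₁, X₃∈A₃).) -/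

import Mathlib

open MeasureTheory

/-- Paper's Theorem 5.3: existence and uniqueness (a.e. with respect to the
co-occurrence measure `P[X₁, X₃ ∈ A₃]`) of the conditional E-integral
`E_{[X₂, X₄ ∈ A₄]}(Y | X₁, X₃ ∈ A₃)`: a measurable `φ : Ω₁ → ℝ` with
`∫_{A₁} φ d(P[X₁, X₃∈A₃]) = ∫ Y d(P[X₂, X₁∈A₁ ∧ X₃∈A₃ ∧ X₄∈A₄])` for all
measurable `A₁`. -/
theorem conditional_E_integral_exists_unique
    {Ω Ω₁ Ω₂ Ω₃ Ω₄ : Type*} [MeasurableSpace Ω] [MeasurableSpace Ω₁] [MeasurableSpace Ω₂]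
    [MeasurableSpace Ω₃] [MeasurableSpace Ω₄]
    (P : Measure Ω) [IsProbabilityMeasure P]
    {X₁ : Ω → Ω₁} {X₂ : Ω → Ω₂} {X₃ : Ω → Ω₃} {X₄ : Ω → Ω₄}
    (hX₁ : Measurable X₁) (hX₂ : Measurable X₂) (hX₃ : Measurable X₃)
    (hX₄ : Measurable X₄)
    (Y : Ω₂ → ℝ) (hY : Measurable Y) (hYint : Integrable Y (P.map X₂))
    {A₃ : Set Ω₃} {A₄ : Set Ω₄} (hA₃ : MeasurableSet A₃) (hA₄ : MeasurableSet A₄)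
    (hpos : 0 < P (X₃ ⁻¹' A₃)) :
    (∃ φ : Ω₁ → ℝ, Measurable φ ∧
      ∀ A₁ : Set Ω₁, MeasurableSet A₁ →
        ∫ x in A₁, φ x ∂((P.restrict (X₃ ⁻¹' A₃)).map X₁) =
          ∫ y, Y y ∂((P.restrict (X₁ ⁻¹' A₁ ∩ X₃ ⁻¹' A₃ ∩ X₄ ⁻¹' A₄)).map X₂)) ∧
    (∀ φ ψ : Ω₁ → ℝ, Measurable φ → Measurable ψ →
      (∀ A₁ : Set Ω₁, MeasurableSet A₁ →
        ∫ x in A₁, φ x ∂((P.restrict (X₃ ⁻¹' A₃)).map X₁) =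
          ∫ y, Y y ∂((P.restrict (X₁ ⁻¹' A₁ ∩ X₃ ⁻¹' A₃ ∩ X₄ ⁻¹' A₄)).map X₂)) →
      (∀ A₁ : Set Ω₁, MeasurableSet A₁ →
        ∫ x in A₁, ψ x ∂((P.restrict (X₃ ⁻¹' A₃)).map X₁) =
          ∫ y, Y y ∂((P.restrict (X₁ ⁻¹' A₁ ∩ X₃ ⁻¹' A₃ ∩ X₄ ⁻¹' A₄)).map X₂)) →
      φ =ᵐ[(P.restrict (X₃ ⁻¹' A₃)).map X₁] ψ) := by
  set Pr : Measure Ω := P.restrict (X₃ ⁻¹' A₃) with hPrdef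
  set μ : Measure Ω₁ := Pr.map X₁ with hμdef
  set g : Ω → ℝ := (X₄ ⁻¹' A₄).indicator (Y ∘ X₂) with hgdef
  have hYX₂ : Integrable (Y ∘ X₂) P :=
    (integrable_map_measure hY.aestronglyMeasurable hX₂.aemeasurable).mp hYint
  have hgmeas : Measurable g := (hY.comp hX₂).indicator (hX₄ hA₄)
  have hgint : Integrable g Pr := (hYX₂.restrict).indicator (hX₄ hA₄)
  have hμfin : IsFiniteMeasure μ := by
    constructor
    rw [hμdef, Measure.map_apply hX₁ MeasurableSet.univ]
    exact lt_of_le_of_lt (measure_mono (Set.subset_univ _))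
      (lt_of_le_of_lt (Measure.restrict_le_self _) (measure_lt_top P _))
  -- key rewriting of the RHS
  have key : ∀ A₁ : Set Ω₁, MeasurableSet A₁ →
      ∫ y, Y y ∂((P.restrict (X₁ ⁻¹' A₁ ∩ X₃ ⁻¹' A₃ ∩ X₄ ⁻¹' A₄)).map X₂)
        = ∫ x in X₁ ⁻¹' A₁, g x ∂Pr := by
    intro A₁ hA₁
    rw [integral_map hX₂.aemeasurable hY.aestronglyMeasurable]
    have hset : X₁ ⁻¹' A₁ ∩ X₃ ⁻¹' A₃ ∩ X₄ ⁻¹' A₄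
        = X₄ ⁻¹' A₄ ∩ (X₁ ⁻¹' A₁ ∩ X₃ ⁻¹' A₃) := by
      ext x; constructor <;> (intro h; exact ⟨h.2, h.1⟩) 
    rw [hset, ← Measure.restrict_restrict (hX₄ hA₄), ← integral_indicator (hX₄ hA₄),
      ← Measure.restrict_restrict (hX₁ hA₁)]
    rfl
  constructor
  · -- existence
    let sm : SignedMeasure Ω₁ := (Pr.withDensityᵥ g).map X₁
    have hsm_apply : ∀ A₁ : Set Ω₁, MeasurableSet A₁ →
        sm A₁ = ∫ x in X₁ ⁻¹' A₁, g x ∂Pr := by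
      intro A₁ hA₁
      rw [show sm A₁ = (Pr.withDensityᵥ g) (X₁ ⁻¹' A₁) from
        VectorMeasure.map_apply _ hX₁ hA₁, withDensityᵥ_apply hgint (hX₁ hA₁)]
    have hac : sm ≪ᵥ μ.toENNRealVectorMeasure := by
      refine VectorMeasure.AbsolutelyContinuous.mk fun s hs h0 => ?_
      rw [Measure.toENNRealVectorMeasure_apply_measurable hs,
        hμdef, Measure.map_apply hX₁ hs] at h0
      rw [hsm_apply s hs, Measure.restrict_eq_zero.mpr h0, integral_zero_measure]
    refine ⟨sm.rnDeriv μ, SignedMeasure.measurable_rnDeriv sm μ, fun A₁ hA₁ => ?_⟩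
    rw [key A₁ hA₁, ← hsm_apply A₁ hA₁,
      ← SignedMeasure.withDensityᵥ_rnDeriv_eq sm μ hac,
      withDensityᵥ_apply (SignedMeasure.integrable_rnDeriv sm μ) hA₁,
      SignedMeasure.withDensityᵥ_rnDeriv_eq sm μ hac]
  · -- uniqueness
    intro φ ψ hφ hψ hφ_eq hψ_eq
    have heq : ∀ A₁ : Set Ω₁, MeasurableSet A₁ →
        ∫ x in A₁, φ x ∂μ = ∫ x in A₁, ψ x ∂μ := fun A₁ hA₁ => by
      rw [hφ_eq A₁ hA₁, ← hψ_eq A₁ hA₁]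
    -- show μ {φ > ψ} = 0 and symmetric
    have main : ∀ (f₁ f₂ : Ω₁ → ℝ), Measurable f₁ → Measurable f₂ →
        (∀ A₁ : Set Ω₁, MeasurableSet A₁ → ∫ x in A₁, f₁ x ∂μ = ∫ x in A₁, f₂ x ∂μ) →
        μ {x | f₂ x < f₁ x} = 0 := by
      intro f₁ f₂ hf₁ hf₂ h
      have hsub : {x | f₂ x < f₁ x} ⊆
          ⋃ (k : ℕ) (M : ℕ), {x | f₂ x + (1 : ℝ)/(k+1) ≤ f₁ x ∧ |f₁ x| ≤ M ∧ |f₂ x| ≤ M} := by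
        intro x hx
        obtain ⟨k, hk⟩ := exists_nat_gt (1 / (f₁ x - f₂ x))
        obtain ⟨M, hM⟩ := exists_nat_ge (max |f₁ x| |f₂ x|)
        simp only [Set.mem_iUnion, Set.mem_setOf_eq]
        have hd : (0:ℝ) < f₁ x - f₂ x := sub_pos.mpr hx
        refine ⟨k, M, ?_, le_trans (le_max_left _ _) hM, le_trans (le_max_right _ _) hM⟩
        have hk1 : (1:ℝ)/(k+1) ≤ f₁ x - f₂ x := by
          rw [div_le_iff₀ (by positivity)]
          have h2 : 1 / (f₁ x - f₂ x) ≤ (k:ℝ) + 1 := le_trans hk.le (by linarith)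
          calc (1:ℝ) = (f₁ x - f₂ x) * (1 / (f₁ x - f₂ x)) := by field_simp
          _ ≤ (f₁ x - f₂ x) * ((k:ℝ)+1) := by nlinarith
        linarith
      refine measure_mono_null hsub (measure_iUnion_null fun k => measure_iUnion_null fun M => ?_)
      set A : Set Ω₁ := {x | f₂ x + (1 : ℝ)/(k+1) ≤ f₁ x ∧ |f₁ x| ≤ M ∧ |f₂ x| ≤ M} with hAdef
      have hAmeas : MeasurableSet A := by
        refine MeasurableSet.inter ?_ (MeasurableSet.inter ?_ ?_)
        · exact measurableSet_le (hf₂.add measurable_const) hf₁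
        · exact measurableSet_le hf₁.abs measurable_const
        · exact measurableSet_le hf₂.abs measurable_const
      have hint₁ : IntegrableOn f₁ A μ :=
        Integrable.mono' (integrable_const (M:ℝ)) hf₁.aestronglyMeasurable.restrict
          (ae_restrict_of_forall_mem hAmeas fun x hx => by
            simpa [Real.norm_eq_abs] using hx.2.1)
      have hint₂ : IntegrableOn f₂ A μ :=
        Integrable.mono' (integrable_const (M:ℝ)) hf₂.aestronglyMeasurable.restrict
          (ae_restrict_of_forall_mem hAmeas fun x hx => by
            simpa [Real.norm_eq_abs] using hx.2.2)
      have hge : ∫ x in A, f₁ x ∂μ ≥ ∫ x in A, f₂ x ∂μ + (1/(k+1)) * (μ A).toReal := by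
        have : ∫ x in A, (f₂ x + (1:ℝ)/(k+1)) ∂μ ≤ ∫ x in A, f₁ x ∂μ := by
          refine setIntegral_mono_on (hint₂.add ((integrableOn_const_iff).mpr
            (Or.inr (measure_lt_top μ A)))) hint₁ hAmeas fun x hx => hx.1
        rw [integral_add hint₂ ((integrableOn_const_iff).mpr (Or.inr (measure_lt_top μ A)))] at this
        simp only [integral_const, Measure.real, Measure.restrict_apply MeasurableSet.univ,
          Set.univ_inter, smul_eq_mul] at this
        linarith [this]
      rw [h A hAmeas] at hge
      have hμA : (μ A).toReal = 0 := by
        have hk0 : (0:ℝ) < 1/((k:ℝ)+1) := by positivity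
        nlinarith [ENNReal.toReal_nonneg (a := μ A)]
      exact (ENNReal.toReal_eq_zero_iff _).mp hμA |>.resolve_right (measure_ne_top μ A)
    have h₁ := main φ ψ hφ hψ heq
    have h₂ := main ψ φ hψ hφ (fun A₁ hA₁ => (heq A₁ hA₁).symm)
    rw [Filter.EventuallyEq, ae_iff]
    refine measure_mono_null (fun x hx => ?_) (measure_union_null h₂ h₁)
    rcases lt_or_gt_of_ne (hx : φ x ≠ ψ x) with h | h
    · exact Or.inl h
    · exact Or.inr h
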